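/- arXiv:1810.07627 — 2 statements merged into one kernel-verified Lean document; each statement's English description precedes it below -/
import Mathlib

section
/- If G₁ and G₂ are finite groups whose enhanced power graphs are isomorphic, then for every positive integer m, G₁ and G₂ have the same number of elements of order m. -/
open SimpleGraph

/-- The enhanced power graph of a group. -/
def enhancedPowerGraph (G : Type*) [Group G] : SimpleGraph G where
  Adj x y := x ≠ y ∧ ∃ z : G, x ∈ Subgroup.zpowers z ∧ y ∈ Subgroup.zpowers z
  symm := by refine ⟨?_⟩; rintro x y ⟨h, z, hx, hy⟩; exact ⟨h.symm, z, hy, hx⟩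
  loopless := by refine ⟨?_⟩; rintro x ⟨h, -⟩; exact h rfl

/-- The (undirected) power graph of a group. -/
def powerGraph (G : Type*) [Group G] : SimpleGraph G where
  Adj x y := x ≠ y ∧ (x ∈ Subgroup.zpowers y ∨ y ∈ Subgroup.zpowers x)
  symm := by refine ⟨?_⟩; rintro x y ⟨h, hz⟩; exact ⟨h.symm, hz.symm⟩
  loopless := by refine ⟨?_⟩; rintro x ⟨h, -⟩; exact h rfl

/-- The strong product of two simple graphs. -/
def strongProd {α β : Type*} (Γ : SimpleGraph α) (Δ : SimpleGraph β) :
    SimpleGraph (α × β) where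
  Adj p q := (p.1 = q.1 ∧ Δ.Adj p.2 q.2) ∨ (Γ.Adj p.1 q.1 ∧ p.2 = q.2) ∨
    (Γ.Adj p.1 q.1 ∧ Δ.Adj p.2 q.2)
  symm := by
    refine ⟨?_⟩
    rintro ⟨a, b⟩ ⟨c, d⟩ (⟨h1, h2⟩ | ⟨h1, h2⟩ | ⟨h1, h2⟩)
    · exact Or.inl ⟨h1.symm, h2.symm⟩
    · exact Or.inr (Or.inl ⟨h1.symm, h2.symm⟩)
    · exact Or.inr (Or.inr ⟨h1.symm, h2.symm⟩)
  loopless := by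
    refine ⟨?_⟩
    rintro ⟨a, b⟩ (⟨-, h⟩ | ⟨h, -⟩ | ⟨h, -⟩) <;> exact h.ne rfl

/-- The automorphism group of a simple graph, as a subgroup of permutations. -/
def graphAut {V : Type*} (Γ : SimpleGraph V) : Subgroup (Equiv.Perm V) where
  carrier := {σ | ∀ x y, Γ.Adj (σ x) (σ y) ↔ Γ.Adj x y}
  one_mem' := fun _ _ => Iff.rfl
  mul_mem' := by
    intro σ τ hσ hτ x y
    simpa [Equiv.Perm.mul_apply] using (hσ (τ x) (τ y)).trans (hτ x y)
  inv_mem' := by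
    intro σ hσ x y
    simpa using (hσ (σ⁻¹ x) (σ⁻¹ y)).symm

/-- A subgroup is maximal cyclic if it is maximal among cyclic subgroups. -/
def IsMaxCyclic {G : Type*} [Group G] (C : Subgroup G) : Prop :=
  Maximal (fun K : Subgroup G => ∃ g : G, K = Subgroup.zpowers g) C

/-- The closed neighborhood of a vertex. -/
def closedNbhd {V : Type*} (Γ : SimpleGraph V) (x : V) : Set V :=
  Γ.neighborSet x ∪ {x}

set_option linter.unusedSectionVars false
set_option linter.unusedVariables false


open Subgroup

section CyclicToolkit

variable {G : Type*} [Group G]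

lemma mem_zpowers_nat [Finite G] {x y : G} (h : y ∈ zpowers x) : ∃ k : ℕ, x ^ k = y := by
  rw [← mem_powers_iff_mem_zpowers] at h
  exact h

lemma zpowers_pow_gcd [Finite G] (z : G) (k : ℕ) :
    zpowers (z ^ k) = zpowers (z ^ Nat.gcd (orderOf z) k) := by
  apply le_antisymm
  · rw [zpowers_le]
    have h : (z ^ Nat.gcd (orderOf z) k) ^ (k / Nat.gcd (orderOf z) k) = z ^ k := by
      rw [← pow_mul, Nat.mul_div_cancel' (Nat.gcd_dvd_right (orderOf z) k)]
    exact h ▸ Subgroup.pow_mem _ (mem_zpowers _) _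
  · rw [zpowers_le]
    have hzn : z ^ ((orderOf z : ℤ) * Nat.gcdA (orderOf z) k) = 1 := by
      rw [zpow_mul, zpow_natCast, pow_orderOf_eq_one, one_zpow]
    have h2 : (z ^ k) ^ Nat.gcdB (orderOf z) k = z ^ Nat.gcd (orderOf z) k := by
      calc (z ^ k) ^ Nat.gcdB (orderOf z) k
          = z ^ ((k : ℤ) * Nat.gcdB (orderOf z) k) := by rw [zpow_mul, zpow_natCast]
        _ = z ^ ((orderOf z : ℤ) * Nat.gcdA (orderOf z) k) *
              z ^ ((k : ℤ) * Nat.gcdB (orderOf z) k) := by rw [hzn, one_mul]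
        _ = z ^ ((orderOf z : ℤ) * Nat.gcdA (orderOf z) k +
              (k : ℤ) * Nat.gcdB (orderOf z) k) := (zpow_add z _ _).symm
        _ = z ^ (Nat.gcd (orderOf z) k : ℤ) := by rw [← Nat.gcd_eq_gcd_ab]
        _ = z ^ Nat.gcd (orderOf z) k := zpow_natCast z _
    exact h2 ▸ zpow_mem (mem_zpowers _) _

/-- Uniqueness: two elements of a cyclic subgroup with the same order generate
the same subgroup. -/
lemma zpowers_eq_of_orderOf_eq [Finite G] {z x w : G} (hx : x ∈ zpowers z)
    (hw : w ∈ zpowers z) (h : orderOf x = orderOf w) : zpowers x = zpowers w := by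
  obtain ⟨k, rfl⟩ := mem_zpowers_nat hx
  obtain ⟨l, rfl⟩ := mem_zpowers_nat hw
  have hn0 : orderOf z ≠ 0 := (orderOf_pos z).ne'
  have hk : orderOf (z ^ k) = orderOf z / Nat.gcd (orderOf z) k := orderOf_pow z
  have hl : orderOf (z ^ l) = orderOf z / Nat.gcd (orderOf z) l := orderOf_pow z
  have hgcd : Nat.gcd (orderOf z) k = Nat.gcd (orderOf z) l := by
    have h1 : orderOf z / (orderOf z / Nat.gcd (orderOf z) k) = Nat.gcd (orderOf z) k :=
      Nat.div_div_self (Nat.gcd_dvd_left _ k) hn0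
    have h2 : orderOf z / (orderOf z / Nat.gcd (orderOf z) l) = Nat.gcd (orderOf z) l :=
      Nat.div_div_self (Nat.gcd_dvd_left _ l) hn0
    rw [← h1, ← h2, ← hk, ← hl, h]
  rw [zpowers_pow_gcd z k, zpowers_pow_gcd z l, hgcd]

lemma orderOf_pow_div [Finite G] {g : G} {m : ℕ} (h : m ∣ orderOf g) :
    orderOf (g ^ (orderOf g / m)) = m := by
  have hn0 : orderOf g ≠ 0 := (orderOf_pos g).ne'
  have hdvd : orderOf g / m ∣ orderOf g := Nat.div_dvd_of_dvd h
  rw [orderOf_pow g, Nat.gcd_eq_right hdvd, Nat.div_div_self h hn0]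

/-- A subgroup of a cyclic subgroup is generated by a single element. -/
lemma exists_zpowers_eq_of_le [Finite G] {K : Subgroup G} {g : G}
    (hK : K ≤ zpowers g) : ∃ κ : G, K = zpowers κ := by
  classical
  have hex : ∃ k : ℕ, 0 < k ∧ g ^ k ∈ K := by
    refine ⟨orderOf g, orderOf_pos g, ?_⟩
    rw [pow_orderOf_eq_one]; exact K.one_mem
  set d := Nat.find hex with hd
  obtain ⟨hd0, hdK⟩ := Nat.find_spec hex
  refine ⟨g ^ d, le_antisymm ?_ ?_⟩
  · intro x hxK
    obtain ⟨k, rfl⟩ := mem_zpowers_nat (hK hxK)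
    have hrd : k % d < d := Nat.mod_lt k hd0
    have hkey : g ^ (k % d) ∈ K := by
      have h1 : g ^ k = (g ^ d) ^ (k / d) * g ^ (k % d) := by
        rw [← pow_mul, ← pow_add, Nat.div_add_mod]
      have h2 : (g ^ d) ^ (k / d) ∈ K := K.pow_mem hdK _
      have h3 : ((g ^ d) ^ (k / d))⁻¹ * g ^ k ∈ K := K.mul_mem (K.inv_mem h2) hxK
      rwa [h1, inv_mul_cancel_left] at h3
    rcases Nat.eq_zero_or_pos (k % d) with hr0 | hr0
    · have hdvd : d ∣ k := Nat.dvd_of_mod_eq_zero hr0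
      rw [mem_zpowers_iff]
      exact ⟨(k / d : ℕ), by rw [zpow_natCast, ← pow_mul, Nat.mul_div_cancel' hdvd]⟩
    · exact absurd hkey (by
        have hmin := Nat.find_min hex hrd
        intro hmem
        exact hmin ⟨hr0, hmem⟩)
  · rw [zpowers_le]; exact hdK

end CyclicToolkit

section GraphSide

variable {G : Type*} [Group G] [Finite G]

lemma mem_closedNbhd_iff {Γ : SimpleGraph G} {x y : G} :
    y ∈ closedNbhd Γ x ↔ Γ.Adj x y ∨ y = x := by
  constructor
  · rintro (h | h)
    · exact Or.inl h
    · exact Or.inr h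
  · rintro (h | h)
    · exact Or.inl h
    · exact Or.inr h

/-- every element lies in some maximal cyclic subgroup -/
lemma exists_isMaxCyclic_mem (x : G) : ∃ M : Subgroup G, IsMaxCyclic M ∧ x ∈ M := by
  have hfin : ({K : Subgroup G | ∃ g : G, K = zpowers g}).Finite := Set.toFinite _
  have hmem : zpowers x ∈ {K : Subgroup G | ∃ g : G, K = zpowers g} := ⟨x, rfl⟩
  obtain ⟨M, hle, hmax⟩ := Set.Finite.exists_le_maximal hfin hmem
  exact ⟨M, hmax, hle (mem_zpowers x)⟩

/-- A maximal cyclic subgroup is contained in the closed neighbourhood of each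
of its elements. -/
lemma coe_subset_closedNbhd {M : Subgroup G} (hM : IsMaxCyclic M) {x : G} (hx : x ∈ M) :
    (M : Set G) ⊆ closedNbhd (enhancedPowerGraph G) x := by
  obtain ⟨g, hg⟩ := hM.1
  intro w hw
  rw [mem_closedNbhd_iff]
  by_cases hwx : w = x
  · exact Or.inr hwx
  · exact Or.inl ⟨fun h => hwx h.symm, g, by rw [hg] at hx; exact hx, by rwa [hg] at hw⟩

/-- The closed neighbourhood of a generator of a maximal cyclic subgroup is that
subgroup. -/
lemma closedNbhd_generator {M : Subgroup G} (hM : IsMaxCyclic M) {g : G}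
    (hg : M = zpowers g) : closedNbhd (enhancedPowerGraph G) g = (M : Set G) := by
  apply Set.Subset.antisymm
  · intro w hw
    rw [mem_closedNbhd_iff] at hw
    rcases hw with hadj | hweq
    · obtain ⟨-, z, hgz, hwz⟩ := hadj
      have hle : M ≤ zpowers z := by rw [hg, zpowers_le]; exact hgz
      have : zpowers z ≤ M := hM.2 ⟨z, rfl⟩ hle
      exact this hwz
    · rw [hweq, hg]; exact mem_zpowers g
  · exact coe_subset_closedNbhd hM (by rw [hg]; exact mem_zpowers g)

/-- Characterisation of maximal cyclic subgroups as the minimal closed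
neighbourhoods. -/
lemma minimal_closedNbhd_iff {s : Set G} :
    Minimal (fun t => ∃ x : G, t = closedNbhd (enhancedPowerGraph G) x) s ↔
      ∃ M : Subgroup G, IsMaxCyclic M ∧ s = (M : Set G) := by
  constructor
  · rintro ⟨⟨x, rfl⟩, hmin⟩
    obtain ⟨M, hM, hxM⟩ := exists_isMaxCyclic_mem x
    obtain ⟨g, hg⟩ := hM.1
    refine ⟨M, hM, ?_⟩
    have h1 : closedNbhd (enhancedPowerGraph G) g ⊆ closedNbhd (enhancedPowerGraph G) x := by
      rw [closedNbhd_generator hM hg]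
      exact coe_subset_closedNbhd hM hxM
    have h2 := hmin ⟨g, rfl⟩ h1
    have h3 : closedNbhd (enhancedPowerGraph G) x ⊆ (M : Set G) := by
      rw [← closedNbhd_generator hM hg]; exact h2
    exact Set.Subset.antisymm h3 (coe_subset_closedNbhd hM hxM)
  · rintro ⟨M, hM, rfl⟩
    obtain ⟨g, hg⟩ := hM.1
    constructor
    · exact ⟨g, (closedNbhd_generator hM hg).symm⟩
    · rintro t ⟨y, rfl⟩ hts
      have hyM : y ∈ M := by
        have : y ∈ closedNbhd (enhancedPowerGraph G) y := by
          rw [mem_closedNbhd_iff]; exact Or.inr rfl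
        exact hts this
      obtain ⟨M', hM', hyM'⟩ := exists_isMaxCyclic_mem y
      have hsub : (M' : Set G) ⊆ (M : Set G) :=
        (coe_subset_closedNbhd hM' hyM').trans hts
      have hMM' : M' = M := by
        obtain ⟨g', hg'⟩ := hM.1
        exact le_antisymm hsub (hM'.2 hM.1 hsub)
      exact hMM' ▸ coe_subset_closedNbhd hM' hyM'

end GraphSide

section Transport

open SimpleGraph Subgroup

variable {G₁ G₂ : Type*} [Group G₁] [Group G₂] [Finite G₁] [Finite G₂]

lemma image_closedNbhd (e : enhancedPowerGraph G₁ ≃g enhancedPowerGraph G₂) (x : G₁) :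
    ⇑e '' closedNbhd (enhancedPowerGraph G₁) x = closedNbhd (enhancedPowerGraph G₂) (e x) := by
  ext w
  constructor
  · rintro ⟨u, hu, rfl⟩
    rw [mem_closedNbhd_iff] at hu ⊢
    rcases hu with h | h
    · exact Or.inl (e.map_adj_iff.mpr h)
    · exact Or.inr (by rw [h])
  · intro hw
    refine ⟨e.symm w, ?_, e.apply_symm_apply w⟩
    rw [mem_closedNbhd_iff] at hw ⊢
    rcases hw with h | h
    · left
      have h2 : (enhancedPowerGraph G₂).Adj (e x) (e (e.symm w)) := by
        rwa [e.apply_symm_apply]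
      exact e.map_adj_iff.mp h2
    · right
      rw [h, e.symm_apply_apply]

lemma exists_isMaxCyclic_image (e : enhancedPowerGraph G₁ ≃g enhancedPowerGraph G₂)
    {M : Subgroup G₁} (hM : IsMaxCyclic M) :
    ∃ M' : Subgroup G₂, IsMaxCyclic M' ∧ (M' : Set G₂) = ⇑e '' (M : Set G₁) := by
  obtain ⟨g, hg⟩ := hM.1
  have himg : ⇑e '' (M : Set G₁) = closedNbhd (enhancedPowerGraph G₂) (e g) := by
    rw [← closedNbhd_generator hM hg]
    exact image_closedNbhd e g
  have hminG₁ : Minimal (fun t => ∃ x : G₁, t = closedNbhd (enhancedPowerGraph G₁) x)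
      (M : Set G₁) := minimal_closedNbhd_iff.mpr ⟨M, hM, rfl⟩
  have hmin : Minimal (fun t => ∃ x : G₂, t = closedNbhd (enhancedPowerGraph G₂) x)
      (closedNbhd (enhancedPowerGraph G₂) (e g)) := by
    refine ⟨⟨e g, rfl⟩, ?_⟩
    rintro t ⟨y, rfl⟩ hts
    have h1 : ⇑e.symm '' closedNbhd (enhancedPowerGraph G₂) y ⊆
        ⇑e.symm '' closedNbhd (enhancedPowerGraph G₂) (e g) := Set.image_mono hts
    rw [image_closedNbhd e.symm y, image_closedNbhd e.symm (e g), e.symm_apply_apply,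
      closedNbhd_generator hM hg] at h1
    have h2 : (M : Set G₁) ⊆ closedNbhd (enhancedPowerGraph G₁) (e.symm y) :=
      hminG₁.2 ⟨e.symm y, rfl⟩ h1
    have h3 : ⇑e '' (M : Set G₁) ⊆
        ⇑e '' closedNbhd (enhancedPowerGraph G₁) (e.symm y) := Set.image_mono h2
    rw [image_closedNbhd e (e.symm y), e.apply_symm_apply, himg] at h3
    exact h3
  obtain ⟨M', hM', hs⟩ := minimal_closedNbhd_iff.mp hmin
  exact ⟨M', hM', by rw [← hs, himg]⟩

end Transport

section Count

open Subgroup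
open scoped Classical

lemma isCyclic_zpowers {G : Type*} [Group G] (g : G) : IsCyclic (zpowers g) := by
  refine ⟨⟨⟨g, mem_zpowers g⟩, fun x => ?_⟩⟩
  obtain ⟨k, hk⟩ := mem_zpowers_iff.mp x.2
  exact ⟨k, Subtype.ext (by simpa using hk)⟩

/-- The set of cyclic subgroups generated by an element of order `m`. -/
def cycSet (G : Type*) [Group G] (m : ℕ) : Set (Subgroup G) :=
  {C : Subgroup G | ∃ x : G, orderOf x = m ∧ C = zpowers x}

variable {G : Type*} [Group G] [Fintype G]

lemma zpowers_eq_of_mem_of_orderOf_eq {x₀ x : G} (hx₀ : x ∈ zpowers x₀)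
    (h : orderOf x = orderOf x₀) : zpowers x = zpowers x₀ := by
  have hle : zpowers x ≤ zpowers x₀ := zpowers_le.mpr hx₀
  refine Subgroup.eq_of_le_of_card_ge hle ?_
  rw [Nat.card_zpowers, Nat.card_zpowers, h]

lemma fiber_card (m : ℕ) (hm : 0 < m) (x₀ : G) (hx₀ : orderOf x₀ = m) :
    (Finset.univ.filter fun x : G => orderOf x = m ∧ zpowers x = zpowers x₀).card
      = m.totient := by
  classical
  set C := zpowers x₀ with hC
  haveI : IsCyclic C := _root_.isCyclic_zpowers x₀
  have hcard : Fintype.card C = m := by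
    rw [← Nat.card_eq_fintype_card, Nat.card_zpowers, hx₀]
  have hdvd : m ∣ Fintype.card C := by rw [hcard]
  have htot := IsCyclic.card_orderOf_eq_totient (α := C) hdvd
  have himg : (Finset.univ.filter fun x : G => orderOf x = m ∧ zpowers x = zpowers x₀)
      = (Finset.univ.filter fun y : C => orderOf y = m).image Subtype.val := by
    ext x
    simp only [Finset.mem_filter, Finset.mem_univ, true_and, Finset.mem_image]
    constructor
    · rintro ⟨h1, h2⟩
      have hxC : x ∈ C := by rw [hC, ← h2]; exact mem_zpowers x
      exact ⟨⟨x, hxC⟩, by rw [Subgroup.orderOf_mk, h1], rfl⟩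
    · rintro ⟨y, hy, rfl⟩
      have h2 : orderOf (y : G) = m := by rw [Subgroup.orderOf_coe, hy]
      exact ⟨h2, zpowers_eq_of_mem_of_orderOf_eq y.2 (by rw [h2, hx₀])⟩
  rw [himg, Finset.card_image_of_injective _ Subtype.val_injective, htot]

lemma card_orderOf_eq_totient_mul (m : ℕ) (hm : 0 < m) :
    Nat.card {x : G | orderOf x = m} = m.totient * Nat.card (cycSet G m) := by
  classical
  have h1 : Nat.card {x : G | orderOf x = m}
      = (Finset.univ.filter fun x : G => orderOf x = m).card := by
    rw [Nat.card_coe_set_eq, Set.ncard_eq_toFinset_card', Set.toFinset_setOf]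
  have h2 : Nat.card (cycSet G m) = (cycSet G m).toFinset.card := by
    rw [Nat.card_coe_set_eq, Set.ncard_eq_toFinset_card']
  rw [h1, h2]
  rw [Finset.card_eq_sum_card_fiberwise (f := fun x : G => zpowers x)
    (t := (cycSet G m).toFinset)
    (fun x hx => by
      rw [Finset.mem_coe, Set.mem_toFinset]
      exact ⟨x, (Finset.mem_filter.mp hx).2, rfl⟩)]
  have h3 : ∀ b ∈ (cycSet G m).toFinset,
      ((Finset.univ.filter fun x : G => orderOf x = m).filter
        fun x => zpowers x = b).card = m.totient := by
    intro b hb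
    rw [Set.mem_toFinset] at hb
    obtain ⟨x₀, hx₀, rfl⟩ := hb
    rw [Finset.filter_filter]
    exact fiber_card m hm x₀ hx₀
  rw [Finset.sum_congr rfl h3, Finset.sum_const, smul_eq_mul, mul_comm]

end Count

section Bij

open Subgroup SimpleGraph

variable {G₁ G₂ : Type*} [Group G₁] [Group G₂] [Finite G₁] [Finite G₂]

lemma card_eq_of_coe_image (e : enhancedPowerGraph G₁ ≃g enhancedPowerGraph G₂)
    {M : Subgroup G₁} {M' : Subgroup G₂} (h : (M' : Set G₂) = ⇑e '' (M : Set G₁)) :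
    Nat.card M' = Nat.card M := by
  rw [← SetLike.coe_sort_coe, ← SetLike.coe_sort_coe, Nat.card_coe_set_eq,
    Nat.card_coe_set_eq, h, Set.ncard_image_of_injective _ e.injective]

/-- The transfer relation between cyclic subgroups of order `m`. -/
def RelEP (e : enhancedPowerGraph G₁ ≃g enhancedPowerGraph G₂) (m : ℕ)
    (C : Subgroup G₁) (C' : Subgroup G₂) : Prop :=
  (∃ x : G₁, orderOf x = m ∧ C = zpowers x) ∧
  (∃ x' : G₂, orderOf x' = m ∧ C' = zpowers x') ∧
  ∃ (M : Subgroup G₁) (M' : Subgroup G₂), IsMaxCyclic M ∧ IsMaxCyclic M' ∧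
    C ≤ M ∧ C' ≤ M' ∧ (M' : Set G₂) = ⇑e '' (M : Set G₁)

lemma relEP_symm {e : enhancedPowerGraph G₁ ≃g enhancedPowerGraph G₂} {m : ℕ}
    {C : Subgroup G₁} {C' : Subgroup G₂} (h : RelEP e m C C') : RelEP e.symm m C' C := by
  obtain ⟨h1, h2, M, M', hM, hM', hle, hle', hset⟩ := h
  refine ⟨h2, h1, M', M, hM', hM, hle', hle, ?_⟩
  rw [hset]
  ext u
  constructor
  · intro hu
    exact ⟨e u, Set.mem_image_of_mem _ hu, e.symm_apply_apply u⟩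
  · rintro ⟨v, ⟨w, hw, rfl⟩, rfl⟩
    rwa [e.symm_apply_apply]

lemma relEP_symm' {e : enhancedPowerGraph G₁ ≃g enhancedPowerGraph G₂} {m : ℕ}
    {C : Subgroup G₁} {C' : Subgroup G₂} (h : RelEP e.symm m C' C) : RelEP e m C C' := by
  obtain ⟨h1, h2, M', M, hM', hM, hle', hle, hset⟩ := h
  refine ⟨h2, h1, M, M', hM, hM', hle, hle', ?_⟩
  rw [hset]
  ext u
  constructor
  · intro hu
    exact ⟨e.symm u, Set.mem_image_of_mem _ hu, e.apply_symm_apply u⟩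
  · rintro ⟨v, ⟨w, hw, rfl⟩, rfl⟩
    rwa [e.apply_symm_apply]

lemma relEP_total (e : enhancedPowerGraph G₁ ≃g enhancedPowerGraph G₂) (m : ℕ)
    {C : Subgroup G₁} (hC : C ∈ cycSet G₁ m) : ∃ C', RelEP e m C C' := by
  obtain ⟨x, hx, rfl⟩ := hC
  have hfin : ({K : Subgroup G₁ | ∃ g : G₁, K = zpowers g}).Finite := Set.toFinite _
  obtain ⟨M, hle, hM⟩ := Set.Finite.exists_le_maximal hfin ⟨x, rfl⟩
  have hM : IsMaxCyclic M := hM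
  obtain ⟨M', hM', hset⟩ := exists_isMaxCyclic_image e hM
  obtain ⟨g', hg'⟩ := hM'.1
  have hcard : Nat.card M' = Nat.card M := card_eq_of_coe_image e hset
  have hm_dvd : m ∣ orderOf g' := by
    have h1 : m ∣ Nat.card M := by
      rw [← hx, ← Nat.card_zpowers]
      exact Subgroup.card_dvd_of_le hle
    rw [← Nat.card_zpowers, ← hg', hcard]
    exact h1
  refine ⟨zpowers (g' ^ (orderOf g' / m)),
    ⟨x, hx, rfl⟩, ⟨g' ^ (orderOf g' / m), orderOf_pow_div hm_dvd, rfl⟩,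
    M, M', hM, hM', hle, ?_, hset⟩
  rw [zpowers_le, hg']
  exact Subgroup.pow_mem _ (mem_zpowers g') _

lemma relEP_func (e : enhancedPowerGraph G₁ ≃g enhancedPowerGraph G₂) (m : ℕ)
    {C : Subgroup G₁} {C₁' C₂' : Subgroup G₂}
    (h1 : RelEP e m C C₁') (h2 : RelEP e m C C₂') : C₁' = C₂' := by
  obtain ⟨⟨x, hx, rfl⟩, ⟨x₁, hx₁, rfl⟩, M₁, M₁', hM₁, hM₁', hle₁, hle₁', hset₁⟩ := h1
  obtain ⟨-, ⟨x₂, hx₂, rfl⟩, M₂, M₂', hM₂, hM₂', hle₂, hle₂', hset₂⟩ := h2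
  have hsetK : ((M₁' ⊓ M₂' : Subgroup G₂) : Set G₂)
      = ⇑e '' ((M₁ ⊓ M₂ : Subgroup G₁) : Set G₁) := by
    rw [Subgroup.coe_inf, Subgroup.coe_inf, hset₁, hset₂,
      ← Set.image_inter e.injective]
  have hmK' : m ∣ Nat.card (M₁' ⊓ M₂' : Subgroup G₂) := by
    rw [card_eq_of_coe_image e hsetK, ← hx, ← Nat.card_zpowers]
    exact Subgroup.card_dvd_of_le (le_inf hle₁ hle₂)
  obtain ⟨g₁', hg₁'⟩ := hM₁'.1
  obtain ⟨g₂', hg₂'⟩ := hM₂'.1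
  obtain ⟨κ, hκ⟩ := exists_zpowers_eq_of_le (K := M₁' ⊓ M₂') (g := g₁')
    (by rw [← hg₁']; exact inf_le_left)
  have hmκ : m ∣ orderOf κ := by rwa [← Nat.card_zpowers, ← hκ]
  set u := κ ^ (orderOf κ / m) with hu
  have hu_ord : orderOf u = m := orderOf_pow_div hmκ
  have huK : u ∈ M₁' ⊓ M₂' := by
    rw [hκ]
    exact Subgroup.pow_mem _ (mem_zpowers κ) _
  have e₁ : zpowers x₁ = zpowers u := by
    refine zpowers_eq_of_orderOf_eq (z := g₁') ?_ ?_ (by rw [hx₁, hu_ord])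
    · have := hle₁' (mem_zpowers x₁); rwa [hg₁'] at this
    · have := huK.1; rwa [hg₁'] at this
  have e₂ : zpowers x₂ = zpowers u := by
    refine zpowers_eq_of_orderOf_eq (z := g₂') ?_ ?_ (by rw [hx₂, hu_ord])
    · have := hle₂' (mem_zpowers x₂); rwa [hg₂'] at this
    · have := huK.2; rwa [hg₂'] at this
  rw [e₁, e₂]

lemma card_cycSet_eq (e : enhancedPowerGraph G₁ ≃g enhancedPowerGraph G₂) (m : ℕ) :
    Nat.card (cycSet G₁ m) = Nat.card (cycSet G₂ m) := by
  classical
  have htot₁ : ∀ C : cycSet G₁ m, ∃ C', RelEP e m C.1 C' :=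
    fun C => relEP_total e m C.2
  choose f hf using htot₁
  have htot₂ : ∀ C' : cycSet G₂ m, ∃ C, RelEP e.symm m C'.1 C :=
    fun C' => relEP_total e.symm m C'.2
  choose g hg using htot₂
  refine Nat.card_congr (Equiv.mk
    (fun C => (⟨f C, (hf C).2.1⟩ : cycSet G₂ m))
    (fun C' => (⟨g C', (hg C').2.1⟩ : cycSet G₁ m)) ?_ ?_)
  · intro C
    apply Subtype.ext
    exact relEP_func e.symm m (hg ⟨f C, (hf C).2.1⟩) (relEP_symm (hf C))
  · intro C'
    apply Subtype.ext
    exact relEP_func e m (hf ⟨g C', (hg C').2.1⟩) (relEP_symm' (hg C'))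

end Bij

theorem stmt_8 {G₁ G₂ : Type*} [Group G₁] [Group G₂] [Fintype G₁] [Fintype G₂]
    (e : enhancedPowerGraph G₁ ≃g enhancedPowerGraph G₂) (m : ℕ) (hm : 0 < m) :
    Nat.card {x : G₁ | orderOf x = m} = Nat.card {x : G₂ | orderOf x = m} := by
  rw [card_orderOf_eq_totient_mul m hm, card_orderOf_eq_totient_mul m hm,
    card_cycSet_eq e m]
end

section
/- If a finite group G has an element whose order equals the exponent of G, then the enhanced power graph of G is weakly perfect, i.e., its chromatic number equals its clique number (both equal to the exponent of G). -/
open SimpleGraph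

open Subgroup in
lemma zpowers_pow_gcd_s19 {G : Type*} [Group G] [Fintype G] (z : G) (a : ℕ) :
    Subgroup.zpowers (z ^ a) = Subgroup.zpowers (z ^ Nat.gcd (orderOf z) a) := by
  set m := orderOf z with hm
  apply le_antisymm
  · rw [Subgroup.zpowers_le]
    have : (z ^ Nat.gcd m a) ^ (a / Nat.gcd m a) = z ^ a := by
      rw [← pow_mul, Nat.mul_div_cancel' (Nat.gcd_dvd_right m a)]
    exact this ▸ pow_mem (Subgroup.mem_zpowers _) _
  · rw [Subgroup.zpowers_le]
    have key : (z ^ a) ^ ((Nat.gcdB m a : ℤ)) = z ^ Nat.gcd m a := by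
      have h1 : ((Nat.gcd m a : ℤ)) = m * Nat.gcdA m a + a * Nat.gcdB m a := Nat.gcd_eq_gcd_ab m a
      have h2 : z ^ ((m : ℤ) * Nat.gcdA m a) = 1 := by
        rw [zpow_mul, zpow_natCast, pow_orderOf_eq_one, one_zpow]
      calc (z ^ a) ^ ((Nat.gcdB m a : ℤ)) = z ^ ((a : ℤ) * Nat.gcdB m a) := by
            rw [← zpow_natCast z a, ← zpow_mul]
        _ = z ^ ((m : ℤ) * Nat.gcdA m a) * z ^ ((a : ℤ) * Nat.gcdB m a) := by rw [h2, one_mul]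
        _ = z ^ ((m : ℤ) * Nat.gcdA m a + (a : ℤ) * Nat.gcdB m a) := (zpow_add z _ _).symm
        _ = z ^ ((Nat.gcd m a : ℤ)) := by rw [← h1]
        _ = z ^ Nat.gcd m a := zpow_natCast z _
    exact key ▸ zpow_mem (Subgroup.mem_zpowers _) _

lemma zpowers_eq_of_orderOf_eq_s19 {G : Type*} [Group G] [Fintype G] {z g h : G}
    (hg : g ∈ Subgroup.zpowers z) (hh : h ∈ Subgroup.zpowers z)
    (hd : orderOf g = orderOf h) : Subgroup.zpowers g = Subgroup.zpowers h := by
  obtain ⟨a, ha⟩ := mem_powers_iff_mem_zpowers.2 hg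
  obtain ⟨b, hb⟩ := mem_powers_iff_mem_zpowers.2 hh
  subst ha hb
  set m := orderOf z with hm
  have hmpos : 0 < m := orderOf_pos z
  have hoa : orderOf (z ^ a) = m / Nat.gcd m a := orderOf_pow z
  have hob : orderOf (z ^ b) = m / Nat.gcd m b := orderOf_pow z
  have hgcd : Nat.gcd m a = Nat.gcd m b := by
    have h1 : Nat.gcd m a ∣ m := Nat.gcd_dvd_left m a
    have h2 : Nat.gcd m b ∣ m := Nat.gcd_dvd_left m b
    have heq := hd
    rw [hoa, hob] at heq
    have e1 : Nat.gcd m a * (m / Nat.gcd m a) = m := Nat.mul_div_cancel' h1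
    have e2 : Nat.gcd m b * (m / Nat.gcd m b) = m := Nat.mul_div_cancel' h2
    rw [heq] at e1
    have hq : 0 < m / Nat.gcd m b :=
      Nat.div_pos (Nat.le_of_dvd hmpos h2) (Nat.gcd_pos_of_pos_left b hmpos)
    exact Nat.eq_of_mul_eq_mul_right hq (e1.trans e2.symm)
  rw [zpowers_pow_gcd_s19 z a, zpowers_pow_gcd_s19 z b, hgcd]

theorem stmt_19 {G : Type*} [Group G] [Fintype G] (x : G)
    (hx : orderOf x = Monoid.exponent G) :
    (enhancedPowerGraph G).chromaticNumber = ((enhancedPowerGraph G).cliqueNum : ℕ∞) ∧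
    (enhancedPowerGraph G).cliqueNum = Monoid.exponent G ∧
    (enhancedPowerGraph G).chromaticNumber = (Monoid.exponent G : ℕ∞) := by
  classical
  set n := Monoid.exponent G with hn
  have hn0 : n ≠ 0 := by
    have := orderOf_pos x
    omega
  -- generator choice for cyclic subgroups
  let gen : Subgroup G → G := fun C =>
    if hC : ∃ z : G, Subgroup.zpowers z = C then hC.choose else 1
  have hgen : ∀ g : G, Subgroup.zpowers (gen (Subgroup.zpowers g)) = Subgroup.zpowers g := by
    intro g
    have hC : ∃ z : G, Subgroup.zpowers z = Subgroup.zpowers g := ⟨g, rfl⟩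
    simp only [gen, dif_pos hC]
    exact hC.choose_spec
  have hord : ∀ g : G, orderOf (gen (Subgroup.zpowers g)) = orderOf g := by
    intro g
    rw [← Nat.card_zpowers, ← Nat.card_zpowers g, hgen]
  have hex : ∀ g : G, ∃ k : ℕ, (gen (Subgroup.zpowers g)) ^ k = g := by
    intro g
    have : g ∈ Subgroup.zpowers (gen (Subgroup.zpowers g)) := by
      rw [hgen]; exact Subgroup.mem_zpowers g
    exact mem_powers_iff_mem_zpowers.2 this
  let kf : G → ℕ := fun g => Nat.find (hex g)
  have hk1 : ∀ g : G, (gen (Subgroup.zpowers g)) ^ (kf g) = g := fun g => Nat.find_spec (hex g)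
  have hklt : ∀ g : G, kf g < orderOf g := by
    intro g
    by_contra hle
    push_neg at hle
    have hd0 : 0 < orderOf g := orderOf_pos g
    have hone : (gen (Subgroup.zpowers g)) ^ (orderOf g) = 1 := by
      rw [← hord g]; exact pow_orderOf_eq_one _
    have hkey : (gen (Subgroup.zpowers g)) ^ (kf g - orderOf g) = g := by
      have h' : (gen (Subgroup.zpowers g)) ^ (kf g - orderOf g) *
          (gen (Subgroup.zpowers g)) ^ (orderOf g) = g := by
        rw [← pow_add, Nat.sub_add_cancel hle, hk1]
      rwa [hone, mul_one] at h'
    exact Nat.find_min (hex g) (Nat.sub_lt (Nat.lt_of_lt_of_le hd0 hle) hd0) hkey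
  have hcop : ∀ g : G, Nat.gcd (orderOf g) (kf g) = 1 := by
    intro g
    have hp : orderOf ((gen (Subgroup.zpowers g)) ^ (kf g)) =
        orderOf (gen (Subgroup.zpowers g)) / Nat.gcd (orderOf (gen (Subgroup.zpowers g))) (kf g) :=
      orderOf_pow _
    rw [hk1 g, hord g] at hp
    have h1 : Nat.gcd (orderOf g) (kf g) ∣ orderOf g := Nat.gcd_dvd_left _ _
    have e : Nat.gcd (orderOf g) (kf g) * (orderOf g / Nat.gcd (orderOf g) (kf g)) = orderOf g :=
      Nat.mul_div_cancel' h1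
    rw [← hp] at e
    have hd0 : 0 < orderOf g := orderOf_pos g
    have : Nat.gcd (orderOf g) (kf g) * orderOf g = 1 * orderOf g := by rw [e, one_mul]
    exact Nat.eq_of_mul_eq_mul_right hd0 this
  -- the coloring
  let c : G → ZMod n := fun g => ((kf g * (n / orderOf g) : ℕ) : ZMod n)
  have hadd : ∀ g : G, addOrderOf (c g) = orderOf g := by
    intro g
    have hdvd : orderOf g ∣ n := Monoid.order_dvd_exponent g
    have hgcd : Nat.gcd n (kf g * (n / orderOf g)) = n / orderOf g := by
      have hn' : n = (n / orderOf g) * orderOf g := (Nat.div_mul_cancel hdvd).symm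
      calc Nat.gcd n (kf g * (n / orderOf g))
          = Nat.gcd ((n / orderOf g) * orderOf g) ((n / orderOf g) * kf g) := by
            rw [← hn', Nat.mul_comm (kf g)]
        _ = (n / orderOf g) * Nat.gcd (orderOf g) (kf g) := Nat.gcd_mul_left _ _ _
        _ = n / orderOf g := by rw [hcop g, mul_one]
    show addOrderOf ((kf g * (n / orderOf g) : ℕ) : ZMod n) = orderOf g
    rw [ZMod.addOrderOf_coe _ hn0, hgcd, Nat.div_div_self hdvd hn0]
  have hproper : ∀ {g h : G}, (enhancedPowerGraph G).Adj g h → c g ≠ c h := by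
    rintro g h ⟨hne, z, hgz, hhz⟩ hc
    by_cases hdo : orderOf g = orderOf h
    · have hzp : Subgroup.zpowers g = Subgroup.zpowers h := zpowers_eq_of_orderOf_eq_s19 hgz hhz hdo
      have hk : kf g ≠ kf h := by
        intro he
        apply hne
        rw [← hk1 g, ← hk1 h, hzp, he]
      have hdvd : orderOf g ∣ n := Monoid.order_dvd_exponent g
      have hq0 : 0 < n / orderOf g :=
        Nat.div_pos (Nat.le_of_dvd (Nat.pos_of_ne_zero hn0) hdvd) (orderOf_pos g)
    -- c g = c h gives kf g * q = kf h * q mod n, both < n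
      have hc' : (kf g * (n / orderOf g)) % n = (kf h * (n / orderOf g)) % n := by
        have : ((kf g * (n / orderOf g) : ℕ) : ZMod n) = ((kf h * (n / orderOf g) : ℕ) : ZMod n) := by
          have := hc
          simp only [c] at this
          rwa [← hdo] at this
        exact (ZMod.natCast_eq_natCast_iff' _ _ _).1 this
      have hlt1 : kf g * (n / orderOf g) < n := by
        calc kf g * (n / orderOf g) < orderOf g * (n / orderOf g) :=
              (Nat.mul_lt_mul_right hq0).2 (hklt g)
          _ = n := by rw [Nat.mul_comm, Nat.div_mul_cancel hdvd]
      have hlt2 : kf h * (n / orderOf g) < n := by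
        calc kf h * (n / orderOf g) < orderOf h * (n / orderOf g) :=
              (Nat.mul_lt_mul_right hq0).2 (hklt h)
          _ = n := by rw [← hdo, Nat.mul_comm, Nat.div_mul_cancel hdvd]
      rw [Nat.mod_eq_of_lt hlt1, Nat.mod_eq_of_lt hlt2] at hc'
      exact hk (Nat.eq_of_mul_eq_mul_right hq0 hc')
    · exact hdo (by rw [← hadd g, ← hadd h, hc])
  haveI : NeZero n := ⟨hn0⟩
  let C : (enhancedPowerGraph G).Coloring (ZMod n) :=
    Coloring.mk c (fun hadj => hproper hadj)
  have hcol : (enhancedPowerGraph G).Colorable n := by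
    have := C.colorable
    rwa [ZMod.card] at this
  -- the clique
  let s : Finset G := Set.toFinset (Subgroup.zpowers x : Set G)
  have hclique : (enhancedPowerGraph G).IsClique s := by
    intro a ha b hb hab
    rw [Finset.mem_coe, Set.mem_toFinset] at ha hb
    exact ⟨hab, x, ha, hb⟩
  have hcard : s.card = n := by
    rw [Set.toFinset_card, ← Nat.card_eq_fintype_card]
    simp only [SetLike.coe_sort_coe, Nat.card_zpowers]
    exact hx
  have h1 : (n : ℕ∞) ≤ (enhancedPowerGraph G).chromaticNumber := by
    have := hclique.card_le_chromaticNumber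
    rwa [hcard] at this
  have h2 : (enhancedPowerGraph G).chromaticNumber ≤ (n : ℕ∞) := hcol.chromaticNumber_le
  have h3 : n ≤ (enhancedPowerGraph G).cliqueNum := by
    have := SimpleGraph.IsClique.card_le_cliqueNum (tc := hclique)
    rwa [hcard] at this
  have h4 : (enhancedPowerGraph G).cliqueNum ≤ n := by
    obtain ⟨t, ht⟩ := (enhancedPowerGraph G).exists_isNClique_cliqueNum
    have := ht.isClique.card_le_of_colorable hcol
    rwa [ht.card_eq] at this
  have hcn : (enhancedPowerGraph G).cliqueNum = n := le_antisymm h4 h3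
  have hch : (enhancedPowerGraph G).chromaticNumber = (n : ℕ∞) := le_antisymm h2 h1
  exact ⟨by rw [hch, hcn], hcn, hch⟩
end
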